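/- If all resources have equal payoffs (μ_k = μ for all k), then the PPA-Game admits a pure Nash equilibrium. -/

import Mathlib

open Finset

/-- Total weight on resource `k` under profile `π`. -/
noncomputable def Wt {N K : ℕ} (w : Fin N → Fin K → ℝ) (π : Fin N → Fin K) (k : Fin K) : ℝ :=
  ∑ j : Fin N, if π j = k then w j k else 0

/-- Utility of player `j` in the PPA-Game. -/
noncomputable def U {N K : ℕ} (μ : Fin K → ℝ) (w : Fin N → Fin K → ℝ)
    (π : Fin N → Fin K) (j : Fin N) : ℝ :=
  if 0 < Wt w π (π j) then μ (π j) * w j (π j) / Wt w π (π j) else 0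

/-- Pure Nash equilibrium of the PPA-Game. -/
def IsPNE {N K : ℕ} (μ : Fin K → ℝ) (w : Fin N → Fin K → ℝ) (π : Fin N → Fin K) : Prop :=
  ∀ j : Fin N, ∀ k' : Fin K, U μ w (Function.update π j k') j ≤ U μ w π j

lemma Wt_update {N K : ℕ} (w : Fin N → Fin K → ℝ) (π : Fin N → Fin K) (j : Fin N)
    (b k : Fin K) :
    Wt w (Function.update π j b) k
      = Wt w π k - (if π j = k then w j k else 0) + (if b = k then w j k else 0) := by
  unfold Wt
  rw [← Finset.add_sum_erase _ (fun i => if Function.update π j b i = k then w i k else 0)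
      (mem_univ j),
    ← Finset.add_sum_erase _ (fun i => if π i = k then w i k else 0) (mem_univ j)]
  have h : ∑ x ∈ univ.erase j, (if Function.update π j b x = k then w x k else 0)
       = ∑ x ∈ univ.erase j, (if π x = k then w x k else 0) := by
    apply Finset.sum_congr rfl
    intro x hx
    rw [Function.update_of_ne (Finset.ne_of_mem_erase hx)]
  rw [h, Function.update_self]
  ring

/-- if all resources have the same payoff, a pure Nash equilibrium exists. -/
theorem stmt3 {N K : ℕ} (hN : 2 ≤ N) (hK : 2 ≤ K)
    (μ : Fin K → ℝ) (w : Fin N → Fin K → ℝ)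
    (hμ : ∀ k, 0 < μ k ∧ μ k ≤ 1) (hw : ∀ j k, 0 ≤ w j k ∧ w j k ≤ 1)
    (hpos : ∀ k : Fin K, ∃ j : Fin N, 0 < w j k)
    (heq : ∀ k k' : Fin K, μ k = μ k') :
    ∃ π : Fin N → Fin K, IsPNE μ w π := by
  classical
  haveI : Nonempty (Fin K) := ⟨⟨0, by omega⟩⟩
  have hWnn : ∀ (σ : Fin N → Fin K) (k : Fin K), 0 ≤ Wt w σ k := by
    intro σ k
    apply Finset.sum_nonneg
    intro i _
    split
    · exact (hw i k).1
    · exact le_refl 0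
  have hUnn : ∀ (σ : Fin N → Fin K) (i : Fin N), 0 ≤ U μ w σ i := by
    intro σ i
    unfold U
    split
    · exact div_nonneg (mul_nonneg (le_of_lt (hμ _).1) (hw _ _).1) (le_of_lt ‹_›)
    · exact le_refl 0
  obtain ⟨π, hπ⟩ := Finite.exists_max (fun σ : Fin N → Fin K =>
    toLex ((univ.filter fun k => 0 < Wt w σ k).card,
      ∏ k, if 0 < Wt w σ k then Wt w σ k else 1))
  refine ⟨π, fun j k' => ?_⟩
  by_contra hcon
  push_neg at hcon
  by_cases hne : π j = k'
  · rw [← hne, Function.update_eq_self] at hcon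
    exact lt_irrefl _ hcon
  set π' := Function.update π j k' with hπ'def
  have hπ'j : π' j = k' := Function.update_self j k' π
  have hU' : 0 < U μ w π' j := lt_of_le_of_lt (hUnn π j) hcon
  have hWb' : 0 < Wt w π' k' := by
    by_contra hh
    unfold U at hU'
    rw [hπ'j, if_neg hh] at hU'
    exact lt_irrefl _ hU'
  have hwb : 0 < w j k' := by
    rcases lt_or_eq_of_le (hw j k').1 with h | h
    · exact h
    · exfalso
      unfold U at hU'
      rw [hπ'j, ← h] at hU'
      simp at hU'
  have hWa' : Wt w π' (π j) = Wt w π (π j) - w j (π j) := by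
    rw [hπ'def, Wt_update, if_pos rfl, if_neg (fun h => hne h.symm)]
    ring
  have hWbeq : Wt w π' k' = Wt w π k' + w j k' := by
    rw [hπ'def, Wt_update, if_neg hne, if_pos rfl]
    ring
  have hWother : ∀ k, k ≠ π j → k ≠ k' → Wt w π' k = Wt w π k := by
    intro k h1 h2
    rw [hπ'def, Wt_update, if_neg (Ne.symm h1), if_neg (Ne.symm h2)]
    ring
  have hWaj : w j (π j) ≤ Wt w π (π j) := by
    have h := Finset.single_le_sum (f := fun i => if π i = π j then w i (π j) else 0)
      (fun i _ => by
        split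
        · exact (hw _ _).1
        · exact le_refl 0) (mem_univ j)
    simpa [Wt] using h
  -- key dichotomy
  have key : w j (π j) = 0 ∨
      (0 < Wt w π (π j) - w j (π j) ∧
        w j (π j) * Wt w π k' < w j k' * (Wt w π (π j) - w j (π j))) := by
    rcases eq_or_lt_of_le (hw j (π j)).1 with h0 | h0
    · exact Or.inl h0.symm
    · right
      have hWa : 0 < Wt w π (π j) := lt_of_lt_of_le h0 hWaj
      have hUj : U μ w π j = μ (π j) * w j (π j) / Wt w π (π j) := by
        unfold U; rw [if_pos hWa]
      have hUj' : U μ w π' j = μ k' * w j k' / Wt w π' k' := by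
        unfold U; rw [hπ'j, if_pos hWb']
      rw [hUj, hUj', heq (π j) k'] at hcon
      have hμp : 0 < μ k' := (hμ k').1
      rw [mul_div_assoc, mul_div_assoc, mul_lt_mul_iff_right₀ hμp] at hcon
      rw [div_lt_div_iff₀ hWa hWb'] at hcon
      rw [hWbeq] at hcon
      have hSb : 0 ≤ Wt w π k' := hWnn π k'
      have hprod : 0 ≤ w j (π j) * Wt w π k' := mul_nonneg (hw j (π j)).1 hSb
      constructor
      · nlinarith [hcon, hprod, hwb]
      · nlinarith [hcon]
  have hposA : ∀ k, 0 < Wt w π k → 0 < Wt w π' k := by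
    intro k hk
    by_cases h1 : k = k'
    · rw [h1]; exact hWb'
    by_cases h2 : k = π j
    · rw [h2, hWa']
      rcases key with h | h
      · rw [h, sub_zero]; rw [h2] at hk; exact hk
      · exact h.1
    · rw [hWother k h2 h1]; exact hk
  have hsub : (univ.filter fun k => 0 < Wt w π k) ⊆ (univ.filter fun k => 0 < Wt w π' k) := by
    intro k hk
    simp only [mem_filter, mem_univ, true_and] at *
    exact hposA k hk
  by_cases hb : 0 < Wt w π k'
  · -- the sets of occupied resources coincide; the product strictly increases
    have hset : (univ.filter fun k => 0 < Wt w π' k) = (univ.filter fun k => 0 < Wt w π k) := by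
      apply Finset.Subset.antisymm _ hsub
      intro k hk
      simp only [mem_filter, mem_univ, true_and] at *
      by_cases h1 : k = k'
      · rw [h1]; exact hb
      by_cases h2 : k = π j
      · rw [h2]; rw [h2, hWa'] at hk
        have := (hw j (π j)).1
        linarith
      · rw [← hWother k h2 h1]; exact hk
    have hgpos : ∀ (σ : Fin N → Fin K) (k : Fin K),
        0 < (if 0 < Wt w σ k then Wt w σ k else 1) := by
      intro σ k; split
      · assumption
      · exact one_pos
    have hk'mem : k' ∈ (univ : Finset (Fin K)).erase (π j) :=
      Finset.mem_erase.2 ⟨Ne.symm hne, mem_univ k'⟩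
    have expand : ∀ (σ : Fin N → Fin K),
        (∏ k, if 0 < Wt w σ k then Wt w σ k else 1)
        = ((if 0 < Wt w σ (π j) then Wt w σ (π j) else 1)
            * (if 0 < Wt w σ k' then Wt w σ k' else 1))
          * ∏ k ∈ ((univ : Finset (Fin K)).erase (π j)).erase k',
              (if 0 < Wt w σ k then Wt w σ k else 1) := by
      intro σ
      rw [← Finset.mul_prod_erase univ (fun k => if 0 < Wt w σ k then Wt w σ k else 1)
          (mem_univ (π j)),
        ← Finset.mul_prod_erase _ (fun k => if 0 < Wt w σ k then Wt w σ k else 1) hk'mem,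
        mul_assoc]
    have htail : ∏ k ∈ ((univ : Finset (Fin K)).erase (π j)).erase k',
          (if 0 < Wt w π' k then Wt w π' k else 1)
        = ∏ k ∈ ((univ : Finset (Fin K)).erase (π j)).erase k',
          (if 0 < Wt w π k then Wt w π k else 1) := by
      apply Finset.prod_congr rfl
      intro k hk
      obtain ⟨hk1, hk2⟩ := Finset.mem_erase.1 hk
      obtain ⟨hk3, _⟩ := Finset.mem_erase.1 hk2
      rw [hWother k hk3 hk1]
    have htailpos : 0 < ∏ k ∈ ((univ : Finset (Fin K)).erase (π j)).erase k',
        (if 0 < Wt w π k then Wt w π k else 1) :=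
      Finset.prod_pos (fun k _ => hgpos π k)
    have hhead : (if 0 < Wt w π (π j) then Wt w π (π j) else 1)
          * (if 0 < Wt w π k' then Wt w π k' else 1)
        < (if 0 < Wt w π' (π j) then Wt w π' (π j) else 1)
          * (if 0 < Wt w π' k' then Wt w π' k' else 1) := by
      rw [if_pos hb, if_pos hWb', hWbeq, hWa']
      rcases key with h | h
      · rw [h, sub_zero]
        have hfa : 0 < (if 0 < Wt w π (π j) then Wt w π (π j) else 1) := hgpos π (π j)
        have : Wt w π k' < Wt w π k' + w j k' := by linarith
        exact mul_lt_mul_of_pos_left this hfa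
      · obtain ⟨hSa, hkey⟩ := h
        have hWa : 0 < Wt w π (π j) := by
          have := (hw j (π j)).1; linarith
        rw [if_pos hWa, if_pos hSa]
        nlinarith [hkey]
    have hΨ : (∏ k, if 0 < Wt w π k then Wt w π k else 1)
        < (∏ k, if 0 < Wt w π' k then Wt w π' k else 1) := by
      rw [expand π, expand π', htail]
      exact mul_lt_mul_of_pos_right hhead htailpos
    have hlt : toLex ((univ.filter fun k => 0 < Wt w π k).card,
          ∏ k, if 0 < Wt w π k then Wt w π k else 1)
        < toLex ((univ.filter fun k => 0 < Wt w π' k).card,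
          ∏ k, if 0 < Wt w π' k then Wt w π' k else 1) := by
      rw [Prod.Lex.lt_iff]
      exact Or.inr ⟨(congrArg Finset.card hset).symm, hΨ⟩
    exact absurd (hπ π') (not_le.2 hlt)
  · -- resource k' becomes newly occupied: the count strictly increases
    have hk'in : k' ∈ (univ.filter fun k => 0 < Wt w π' k) := by
      simp only [mem_filter, mem_univ, true_and]; exact hWb'
    have hk'out : k' ∉ (univ.filter fun k => 0 < Wt w π k) := by
      simp only [mem_filter, mem_univ, true_and]; exact hb
    have hcard : (univ.filter fun k => 0 < Wt w π k).card
        < (univ.filter fun k => 0 < Wt w π' k).card :=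
      Finset.card_lt_card ((Finset.ssubset_iff_of_subset hsub).2 ⟨k', hk'in, hk'out⟩)
    have hlt : toLex ((univ.filter fun k => 0 < Wt w π k).card,
          ∏ k, if 0 < Wt w π k then Wt w π k else 1)
        < toLex ((univ.filter fun k => 0 < Wt w π' k).card,
          ∏ k, if 0 < Wt w π' k then Wt w π' k else 1) := by
      rw [Prod.Lex.lt_iff]
      exact Or.inl hcard
    exact absurd (hπ π') (not_le.2 hlt)
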